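/- Let (Δ_t)_{t≥0} be a sequence of reals with Δ_{t+1} = (1 − α_t) Δ_t + α_t β_t, where α_t ∈ [0,1], ∑_t α_t = ∞, and |β_t| ≤ γ |Δ_t| + c for constants γ ∈ [0,1) and c ≥ 0. Then limsup_{t→∞} |Δ_t| ≤ c/(1−γ); in particular the sequence (Δ_t) is bounded. -/

import Mathlib

open Filter in
/-- Deterministic stochastic-approximation boundedness lemma. -/
theorem sa_iterates_bounded (Δ α β : ℕ → ℝ) (γ c : ℝ)
    (hγ : γ ∈ Set.Ico (0:ℝ) 1) (hc : 0 ≤ c)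
    (hα : ∀ t, α t ∈ Set.Icc (0:ℝ) 1)
    (hαdiv : Tendsto (fun n => ∑ t ∈ Finset.range n, α t) atTop atTop)
    (hβ : ∀ t, |β t| ≤ γ * |Δ t| + c)
    (hupd : ∀ t, Δ (t + 1) = (1 - α t) * Δ t + α t * β t) :
    Filter.limsup (fun t => |Δ t|) atTop ≤ c / (1 - γ) ∧ ∃ C, ∀ t, |Δ t| ≤ C := by
  obtain ⟨hγ0, hγ1⟩ := hγ
  have h1γ : 0 < 1 - γ := by linarith
  set L : ℝ := c / (1 - γ) with hL
  have hL0 : 0 ≤ L := div_nonneg hc h1γ.le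
  have hLc : (1 - γ) * L = c := by rw [hL, mul_div_assoc']; exact mul_div_cancel_left₀ c h1γ.ne'
  set q : ℕ → ℝ := fun t => 1 - α t * (1 - γ) with hq
  have hq0 : ∀ t, 0 ≤ q t := fun t => by
    show 0 ≤ 1 - α t * (1 - γ)
    nlinarith [(hα t).1, (hα t).2]
  have hq1 : ∀ t, q t ≤ 1 := fun t => by
    show 1 - α t * (1 - γ) ≤ 1
    nlinarith [(hα t).1]
  -- key inequality
  have key : ∀ t, |Δ (t + 1)| ≤ q t * |Δ t| + α t * c := by
    intro t
    have h1 : |Δ (t + 1)| ≤ (1 - α t) * |Δ t| + α t * |β t| := by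
      rw [hupd t]
      calc |(1 - α t) * Δ t + α t * β t| ≤ |(1 - α t) * Δ t| + |α t * β t| := abs_add_le _ _
        _ = (1 - α t) * |Δ t| + α t * |β t| := by
            rw [abs_mul, abs_mul, abs_of_nonneg (by linarith [(hα t).2] : (0:ℝ) ≤ 1 - α t),
              abs_of_nonneg (hα t).1]
    have h2 : α t * |β t| ≤ α t * (γ * |Δ t| + c) :=
      mul_le_mul_of_nonneg_left (hβ t) (hα t).1
    have : |Δ (t + 1)| ≤ (1 - α t) * |Δ t| + α t * (γ * |Δ t| + c) := by linarith
    calc |Δ (t + 1)| ≤ (1 - α t) * |Δ t| + α t * (γ * |Δ t| + c) := this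
      _ = q t * |Δ t| + α t * c := by ring
  set E : ℕ → ℝ := fun t => max (|Δ t| - L) 0 with hE
  have hE0 : ∀ t, 0 ≤ E t := fun t => le_max_right _ _
  have hEkey : ∀ t, E (t + 1) ≤ q t * E t := by
    intro t
    apply max_le _ (mul_nonneg (hq0 t) (hE0 t))
    have h1 : |Δ (t + 1)| - L ≤ q t * (|Δ t| - L) := by
      have := key t
      have hqc : q t * L + α t * c = L := by
        show (1 - α t * (1 - γ)) * L + α t * c = L
        linear_combination (-(α t)) * hLc
      nlinarith
    calc |Δ (t + 1)| - L ≤ q t * (|Δ t| - L) := h1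
      _ ≤ q t * E t := mul_le_mul_of_nonneg_left (le_max_left _ _) (hq0 t)
  -- boundedness
  have hEbound : ∀ t, E t ≤ E 0 := by
    intro t
    induction t with
    | zero => exact le_refl _
    | succ n ih =>
        calc E (n + 1) ≤ q n * E n := hEkey n
          _ ≤ 1 * E n := mul_le_mul_of_nonneg_right (hq1 n) (hE0 n)
          _ = E n := one_mul _
          _ ≤ E 0 := ih
  have habs_le : ∀ t, |Δ t| ≤ L + E t := by
    intro t
    have := le_max_left (|Δ t| - L) 0
    linarith
  refine ⟨?_, ⟨L + E 0, fun t => (habs_le t).trans (by linarith [hEbound t])⟩⟩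
  -- E n ≤ product bound
  have hEprod : ∀ n, E n ≤ (∏ t ∈ Finset.range n, q t) * E 0 := by
    intro n
    induction n with
    | zero => simp
    | succ m ih =>
        calc E (m + 1) ≤ q m * E m := hEkey m
          _ ≤ q m * ((∏ t ∈ Finset.range m, q t) * E 0) :=
              mul_le_mul_of_nonneg_left ih (hq0 m)
          _ = (∏ t ∈ Finset.range (m + 1), q t) * E 0 := by
              rw [Finset.prod_range_succ]; ring
  have hprod_le : ∀ n, (∏ t ∈ Finset.range n, q t) ≤
      Real.exp (-(1 - γ) * ∑ t ∈ Finset.range n, α t) := by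
    intro n
    calc (∏ t ∈ Finset.range n, q t) ≤ ∏ t ∈ Finset.range n, Real.exp (-(α t * (1 - γ))) := by
          apply Finset.prod_le_prod (fun t _ => hq0 t)
          intro t _
          have := Real.add_one_le_exp (-(α t * (1 - γ)))
          simpa [hq] using (by linarith : 1 - α t * (1 - γ) ≤ Real.exp (-(α t * (1 - γ))))
      _ = Real.exp (∑ t ∈ Finset.range n, -(α t * (1 - γ))) := (Real.exp_sum _ _).symm
      _ = Real.exp (-(1 - γ) * ∑ t ∈ Finset.range n, α t) := by
          congr 1
          rw [Finset.mul_sum]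
          exact Finset.sum_congr rfl fun t _ => by ring
  have hexp0 : Tendsto (fun n => Real.exp (-(1 - γ) * ∑ t ∈ Finset.range n, α t)) atTop (nhds 0) := by
    apply Real.tendsto_exp_atBot.comp
    have h3 : Tendsto (fun n => (1 - γ) * ∑ t ∈ Finset.range n, α t) atTop atTop :=
      hαdiv.const_mul_atTop h1γ
    have h4 := tendsto_neg_atTop_atBot.comp h3
    refine h4.congr fun n => ?_
    simp [Function.comp]; ring
  have hprodzero : Tendsto (fun n => ∏ t ∈ Finset.range n, q t) atTop (nhds 0) := by
    apply squeeze_zero (fun n => Finset.prod_nonneg fun t _ => hq0 t) hprod_le hexp0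
  have hEzero : Tendsto E atTop (nhds 0) := by
    have h := hprodzero.mul_const (E 0)
    rw [zero_mul] at h
    exact squeeze_zero hE0 hEprod h
  have hlim : Tendsto (fun t => L + E t) atTop (nhds L) := by
    simpa using (tendsto_const_nhds.add hEzero)
  calc Filter.limsup (fun t => |Δ t|) atTop ≤ Filter.limsup (fun t => L + E t) atTop := by
        apply Filter.limsup_le_limsup (Filter.Eventually.of_forall habs_le)
          (Filter.isCoboundedUnder_le_of_le atTop (fun t => abs_nonneg _))
          hlim.isBoundedUnder_le
    _ = L := hlim.limsup_eq
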